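/- Let B > 0. (i) For every multiset S of odd size n ≥ 3 of real numbers contained in [0, B] and every x ∈ [0, B], one has |median(S ∪ {x}) − median(S)| ≤ B/2. (ii) This bound is attained: there exist an odd n ≥ 3, a multiset S ⊆ [0, B] of size n, and x ∈ [0, B] with |median(S ∪ {x}) − median(S)| = B/2. -/

import Mathlib

/-- The median of a finite multiset of reals: the middle sorted value for odd size,
and the average of the two middle sorted values for even size. -/
noncomputable def mmedian (s : Multiset ℝ) : ℝ :=
  if s.card % 2 = 1 then (s.sort (· ≤ ·)).getD ((s.card - 1) / 2) 0
  else ((s.sort (· ≤ ·)).getD (s.card / 2 - 1) 0 + (s.sort (· ≤ ·)).getD (s.card / 2) 0) / 2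

private lemma getD_mem_of_lt {l : List ℝ} {i : ℕ} (h : i < l.length) : l.getD i 0 ∈ l := by
  rw [List.getD_eq_getElem l 0 h]
  exact List.getElem_mem h

private lemma sorted_adj {l : List ℝ} (hl : l.Pairwise (· ≤ ·)) {j : ℕ} (h : j + 1 < l.length) :
    l.getD j 0 ≤ l.getD (j + 1) 0 := by
  rw [List.getD_eq_getElem l 0 (by omega), List.getD_eq_getElem l 0 h]
  exact hl.rel_get_of_lt (by simp)

private lemma ins_le {x : ℝ} : ∀ {l : List ℝ}, l.Pairwise (· ≤ ·) → ∀ i < l.length,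
    (l.orderedInsert (· ≤ ·) x).getD i 0 ≤ l.getD i 0 := by
  intro l
  induction l with
  | nil => intro _ i hi; simp at hi
  | cons a t ih =>
    intro hs i hi
    rw [List.orderedInsert]
    by_cases hxa : x ≤ a
    · rw [if_pos hxa]
      match i with
      | 0 => simpa using hxa
      | j + 1 =>
        simp only [List.getD_cons_succ]
        exact sorted_adj hs (by simpa using hi)
    · rw [if_neg hxa]
      match i with
      | 0 => simp
      | j + 1 =>
        simp only [List.getD_cons_succ]
        exact ih hs.of_cons j (by simpa using hi)

private lemma le_ins {x : ℝ} : ∀ {l : List ℝ}, l.Pairwise (· ≤ ·) → ∀ i < l.length,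
    l.getD i 0 ≤ (l.orderedInsert (· ≤ ·) x).getD (i + 1) 0 := by
  intro l
  induction l with
  | nil => intro _ i hi; simp at hi
  | cons a t ih =>
    intro hs i hi
    rw [List.orderedInsert]
    by_cases hxa : x ≤ a
    · rw [if_pos hxa]; simp
    · rw [if_neg hxa]
      match i with
      | 0 =>
        simp only [List.getD_cons_zero, List.getD_cons_succ]
        have hlen : (0 : ℕ) < (t.orderedInsert (· ≤ ·) x).length := by
          rw [List.orderedInsert_length]; omega
        have hmem := getD_mem_of_lt hlen
        rcases (List.mem_orderedInsert _).mp hmem with h | h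
        · rw [h]; linarith [not_le.mp hxa]
        · exact List.rel_of_pairwise_cons hs h
      | j + 1 =>
        simp only [List.getD_cons_succ]
        exact ih hs.of_cons j (by simpa using hi)

private lemma eq_of_perm_of_sorted' {l₁ l₂ : List ℝ} (hp : l₁.Perm l₂)
    (h₁ : l₁.Pairwise (· ≤ ·)) (h₂ : l₂.Pairwise (· ≤ ·)) : l₁ = l₂ :=
  List.Perm.eq_of_pairwise' h₁ h₂ hp

private lemma sort_cons_eq (x : ℝ) (S : Multiset ℝ) :
    (x ::ₘ S).sort (· ≤ ·) = (S.sort (· ≤ ·)).orderedInsert (· ≤ ·) x := by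
  refine eq_of_perm_of_sorted' ?_ (Multiset.pairwise_sort _ _)
    ((Multiset.pairwise_sort S _).orderedInsert x _)
  have h1 : ((x ::ₘ S).sort (· ≤ ·) : Multiset ℝ) = ↑(x :: S.sort (· ≤ ·)) := by
    rw [Multiset.sort_eq, ← Multiset.cons_coe, Multiset.sort_eq]
  exact (Multiset.coe_eq_coe.mp h1).trans (List.perm_orderedInsert _ _ _).symm

/-- (i) For every odd-size multiset `S ⊆ [0,B]` of size `≥ 3` and every `x ∈ [0,B]`,
`|median(S ∪ {x}) − median(S)| ≤ B/2`; and (ii) this bound is attained.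
Together: the global sensitivity of the median under adding one point equals `B/2`. -/
theorem stmt2 (B : ℝ) (hB : 0 < B) :
    (∀ S : Multiset ℝ, 3 ≤ S.card → Odd S.card → (∀ x ∈ S, x ∈ Set.Icc (0 : ℝ) B) →
      ∀ x ∈ Set.Icc (0 : ℝ) B, |mmedian (x ::ₘ S) - mmedian S| ≤ B / 2) ∧
    (∃ S : Multiset ℝ, 3 ≤ S.card ∧ Odd S.card ∧ (∀ x ∈ S, x ∈ Set.Icc (0 : ℝ) B) ∧
      ∃ x ∈ Set.Icc (0 : ℝ) B, |mmedian (x ::ₘ S) - mmedian S| = B / 2) := by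
  constructor
  · intro S hS3 hodd hsub x hx
    obtain ⟨k, hk⟩ := hodd
    set l := S.sort (· ≤ ·) with hl
    have hlen : l.length = k + k + 1 := by rw [Multiset.length_sort]; omega
    have hins : (x ::ₘ S).sort (· ≤ ·) = l.orderedInsert (· ≤ ·) x := sort_cons_eq x S
    have hlen' : (l.orderedInsert (· ≤ ·) x).length = k + k + 2 := by
      rw [List.orderedInsert_length, hlen]
    have hsort : l.Pairwise (· ≤ ·) := Multiset.pairwise_sort _ _
    have hmed : mmedian S = l.getD k 0 := by
      rw [mmedian, if_pos (by omega : S.card % 2 = 1)]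
      have : (S.card - 1) / 2 = k := by omega
      rw [this]
    have hmed' : mmedian (x ::ₘ S) =
        ((l.orderedInsert (· ≤ ·) x).getD k 0 + (l.orderedInsert (· ≤ ·) x).getD (k + 1) 0) / 2 := by
      rw [mmedian, if_neg (by rw [Multiset.card_cons]; omega), Multiset.card_cons, hins]
      have h1 : (S.card + 1) / 2 - 1 = k := by omega
      have h2 : (S.card + 1) / 2 = k + 1 := by omega
      rw [h1, h2]
    have ha_le : (l.orderedInsert (· ≤ ·) x).getD k 0 ≤ l.getD k 0 :=
      ins_le (x := x) hsort k (by omega)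
    have hb_ge : l.getD k 0 ≤ (l.orderedInsert (· ≤ ·) x).getD (k + 1) 0 :=
      le_ins (x := x) hsort k (by omega)
    have hmem' : ∀ y ∈ l.orderedInsert (· ≤ ·) x, 0 ≤ y ∧ y ≤ B := by
      intro y hy
      rcases (List.mem_orderedInsert _).mp hy with h | h
      · exact ⟨h ▸ hx.1, h ▸ hx.2⟩
      · have := hsub y (Multiset.mem_sort _ |>.mp h)
        exact ⟨this.1, this.2⟩
    have ha0 : 0 ≤ (l.orderedInsert (· ≤ ·) x).getD k 0 :=
      (hmem' _ (getD_mem_of_lt (by omega))).1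
    have hbB : (l.orderedInsert (· ≤ ·) x).getD (k + 1) 0 ≤ B :=
      (hmem' _ (getD_mem_of_lt (by omega))).2
    have hm01 := hsub (l.getD k 0) (Multiset.mem_sort _ |>.mp (getD_mem_of_lt (by rw [Multiset.length_sort]; omega)))
    rw [hmed, hmed', abs_le]
    constructor <;> [linarith [hm01.1]; linarith [hm01.2]]
  · have hcard : (↑[(0 : ℝ), 0, B] : Multiset ℝ).card = 3 := by simp
    refine ⟨↑[(0 : ℝ), 0, B], by rw [hcard], by rw [hcard]; decide, ?_,
      B, ⟨hB.le, le_refl B⟩, ?_⟩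
    · intro y hy
      simp only [Multiset.mem_coe, List.mem_cons, List.not_mem_nil, or_false] at hy
      rcases hy with rfl | rfl | rfl <;> constructor <;> linarith
    · have hs1 : List.Pairwise (· ≤ ·) [(0 : ℝ), 0, B] := by
        simp [List.pairwise_cons, hB.le]
      have hs2 : List.Pairwise (· ≤ ·) [(0 : ℝ), 0, B, B] := by
        simp [List.pairwise_cons, hB.le]
      have hsortS : (↑[(0 : ℝ), 0, B] : Multiset ℝ).sort (· ≤ ·) = [0, 0, B] :=
        eq_of_perm_of_sorted' (Multiset.coe_eq_coe.mp (Multiset.sort_eq _ _))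
          (Multiset.pairwise_sort _ _) hs1
      have hsortS' : ((B ::ₘ ↑[(0 : ℝ), 0, B]) : Multiset ℝ).sort (· ≤ ·) = [0, 0, B, B] := by
        refine eq_of_perm_of_sorted' ?_ (Multiset.pairwise_sort _ _) hs2
        refine Multiset.coe_eq_coe.mp ?_
        rw [Multiset.sort_eq, ← Multiset.cons_coe]
        refine Multiset.coe_eq_coe.mpr ?_
        exact (List.Perm.swap 0 B [0, B]).trans ((List.Perm.swap 0 B [B]).cons 0)
      have hc1 : ((B ::ₘ ↑[(0 : ℝ), 0, B]) : Multiset ℝ).card = 4 := by simp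
      rw [mmedian, mmedian, hsortS, hsortS', hc1, hcard]
      norm_num
      positivity
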